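/- There exist absolute constants c > 0 and C > 0 such that for all finite nonempty sets A, B in an abelian group and every nonempty G ⊆ A × B, there exists a subset A' ⊆ A with |A'| ≥ c·|G|/|B| and |A' − A'| ≤ C · |A|⁴ · |B|³ · |A −_G B|⁴ / |G|⁵. -/

import Mathlib

set_option maxHeartbeats 4000000

open Finset

lemma prodFilterCard {α β : Type*} (s : Finset α) (t : Finset β) (P : α → β → Prop)
    [∀ x, DecidablePred (P x)] :
    ((s ×ˢ t).filter fun p => P p.1 p.2).card = ∑ x ∈ s, (t.filter (P x)).card := by
  rw [Finset.card_filter, Finset.sum_product]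
  exact Finset.sum_congr rfl fun x _ => (Finset.card_filter _ _).symm

lemma tripleFilterCard {α β γ : Type*} (s : Finset α) (t : Finset β) (u : Finset γ)
    (P₁ : α → β → Prop) (P₂ : α → γ → Prop)
    [∀ x, DecidablePred (P₁ x)] [∀ x, DecidablePred (P₂ x)] :
    ((s ×ˢ t ×ˢ u).filter fun q => P₁ q.1 q.2.1 ∧ P₂ q.1 q.2.2).card
      = ∑ z ∈ s, (t.filter (P₁ z)).card * (u.filter (P₂ z)).card := by
  rw [Finset.card_filter, Finset.sum_product]
  refine Finset.sum_congr rfl fun z _ => ?_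
  rw [Finset.sum_product, Finset.card_filter, Finset.card_filter, Finset.sum_mul_sum]
  refine Finset.sum_congr rfl fun y1 _ => ?_
  by_cases h : P₁ z y1 <;> simp [h]

section BSG

variable {G : Type} [AddCommGroup G] [DecidableEq G]

/-- codegree: number of common neighbours in `Bs`. -/
def codP (Γ : Finset (G × G)) (Bs : Finset G) (x y : G) : ℕ :=
  (Bs.filter fun β => (x, β) ∈ Γ ∧ (y, β) ∈ Γ).card

/-- popular pair. -/
def goodP (Γ : Finset (G × G)) (As Bs : Finset G) (x y : G) : Prop :=
  3 * Γ.card ^ 2 ≤ 32 * As.card ^ 2 * Bs.card * codP Γ Bs x y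

instance (Γ : Finset (G × G)) (As Bs : Finset G) (x y : G) :
    Decidable (goodP Γ As Bs x y) := by unfold goodP; infer_instance

/-- neighbourhood of `β` inside `As`. -/
def NP (Γ : Finset (G × G)) (As : Finset G) (β : G) : Finset G :=
  As.filter fun x => (x, β) ∈ Γ

omit [AddCommGroup G] in
lemma codP_comm (Γ : Finset (G × G)) (Bs : Finset G) (x y : G) :
    codP Γ Bs x y = codP Γ Bs y x := by
  unfold codP; congr 1; ext β; simp [and_comm]

theorem stmt13 :
    ∃ c C : ℝ, 0 < c ∧ 0 < C ∧
      ∀ (G : Type) [AddCommGroup G] [DecidableEq G],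
        ∀ A B : Finset G, A.Nonempty → B.Nonempty →
          ∀ Γ : Finset (G × G), Γ ⊆ A ×ˢ B → Γ.Nonempty →
            ∃ A' ⊆ A, c * (Γ.card : ℝ) / (B.card : ℝ) ≤ (A'.card : ℝ) ∧
              (((A' ×ˢ A').image fun x => x.1 - x.2).card : ℝ) ≤
                C * (A.card : ℝ) ^ 4 * (B.card : ℝ) ^ 3 *
                  ((Γ.image fun x => x.1 - x.2).card : ℝ) ^ 4 / (Γ.card : ℝ) ^ 5 := by
  refine ⟨1/4, 1024, by norm_num, by norm_num, ?_⟩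
  intro G _ _ A B hA hB Γ hΓsub hΓne
  -- basic positivity
  have haA : 0 < A.card := Finset.card_pos.mpr hA
  have hbB : 0 < B.card := Finset.card_pos.mpr hB
  have heΓ : 0 < Γ.card := Finset.card_pos.mpr hΓne
  set S : Finset G := Γ.image fun x => x.1 - x.2 with hS
  have hdS : 0 < S.card := Finset.card_pos.mpr (hΓne.image _)
  -- real abbreviations
  set ra : ℝ := (A.card : ℝ) with hra
  set rb : ℝ := (B.card : ℝ) with hrb
  set re : ℝ := (Γ.card : ℝ) with hre
  set rd : ℝ := (S.card : ℝ) with hrd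
  have hra1 : (1:ℝ) ≤ ra := by exact Nat.one_le_cast.mpr haA
  have hrb1 : (1:ℝ) ≤ rb := by exact Nat.one_le_cast.mpr hbB
  have hre1 : (1:ℝ) ≤ re := by exact Nat.one_le_cast.mpr heΓ
  have hrd1 : (1:ℝ) ≤ rd := by exact Nat.one_le_cast.mpr hdS
  -- edge count
  have h1 : ∑ β ∈ B, (NP Γ A β).card = Γ.card := by
    have hfib : Γ.card = ∑ β ∈ B, (Γ.filter fun p => p.2 = β).card :=
      Finset.card_eq_sum_card_fiberwise fun p hp => (Finset.mem_product.mp (hΓsub hp)).2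
    rw [hfib]
    refine Finset.sum_congr rfl fun β hβ => ?_
    refine (Finset.card_bij (fun p _ => p.1) ?_ ?_ ?_).symm
    · intro p hp
      simp only [Finset.mem_filter] at hp
      have hpA := (Finset.mem_product.mp (hΓsub hp.1)).1
      have hpe : (p.1, β) = p := by rw [← hp.2]
      simp only [NP, Finset.mem_filter]
      exact ⟨hpA, by rw [hpe]; exact hp.1⟩
    · intro p hp q hq h
      simp only [Finset.mem_filter] at hp hq
      exact Prod.ext h (hp.2.trans hq.2.symm)
    · intro x hx
      simp only [Finset.mem_filter, NP] at hx
      exact ⟨(x, β), Finset.mem_filter.mpr ⟨hx.2, rfl⟩, rfl⟩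
  -- Cauchy-Schwarz
  have h2 : re ^ 2 ≤ rb * ∑ β ∈ B, ((NP Γ A β).card : ℝ) ^ 2 := by
    have hcs := sq_sum_le_card_mul_sum_sq (s := B) (f := fun β => ((NP Γ A β).card : ℝ))
    calc re ^ 2 = (∑ β ∈ B, ((NP Γ A β).card : ℝ)) ^ 2 := by
          rw [← Nat.cast_sum, h1]
      _ ≤ rb * ∑ β ∈ B, ((NP Γ A β).card : ℝ) ^ 2 := hcs
  -- bad-pair count per β
  set badc : G → ℕ := fun β =>
    ((NP Γ A β ×ˢ NP Γ A β).filter fun p => ¬ goodP Γ A B p.1 p.2).card with hbadc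
  -- double counting
  have h3 : ∑ β ∈ B, badc β
      = ∑ p ∈ (A ×ˢ A).filter (fun p => ¬ goodP Γ A B p.1 p.2), codP Γ B p.1 p.2 := by
    have step1 : ∀ β, ((NP Γ A β ×ˢ NP Γ A β).filter fun p => ¬ goodP Γ A B p.1 p.2)
        = ((A ×ˢ A).filter fun p =>
            ¬ goodP Γ A B p.1 p.2 ∧ p.1 ∈ NP Γ A β ∧ p.2 ∈ NP Γ A β) := by
      intro β
      ext p
      simp only [Finset.mem_filter, Finset.mem_product, NP]
      tauto
    calc ∑ β ∈ B, badc β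
        = ∑ β ∈ B, ∑ p ∈ A ×ˢ A,
            if ¬ goodP Γ A B p.1 p.2 ∧ p.1 ∈ NP Γ A β ∧ p.2 ∈ NP Γ A β then 1 else 0 := by
          exact Finset.sum_congr rfl fun β _ => by
            simp only [hbadc]; rw [step1 β, Finset.card_filter]
      _ = ∑ p ∈ A ×ˢ A, ∑ β ∈ B,
            if ¬ goodP Γ A B p.1 p.2 ∧ p.1 ∈ NP Γ A β ∧ p.2 ∈ NP Γ A β then 1 else 0 :=
          Finset.sum_comm
      _ = ∑ p ∈ A ×ˢ A, if ¬ goodP Γ A B p.1 p.2 then codP Γ B p.1 p.2 else 0 := by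
          refine Finset.sum_congr rfl fun p hp => ?_
          rw [Finset.mem_product] at hp
          by_cases hg : goodP Γ A B p.1 p.2
          · simp [hg]
          · simp only [hg, not_false_iff, true_and, if_true]
            rw [← Finset.card_filter]
            unfold codP
            congr 1
            ext β
            simp only [Finset.mem_filter, NP]
            tauto
      _ = ∑ p ∈ (A ×ˢ A).filter (fun p => ¬ goodP Γ A B p.1 p.2), codP Γ B p.1 p.2 :=
          (Finset.sum_filter _ _).symm
  -- bound on total badness
  have h4 : (∑ β ∈ B, badc β) * (32 * A.card ^ 2 * B.card) ≤ A.card ^ 2 * (3 * Γ.card ^ 2) := by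
    rw [h3, Finset.sum_mul]
    calc ∑ p ∈ (A ×ˢ A).filter (fun p => ¬ goodP Γ A B p.1 p.2),
          codP Γ B p.1 p.2 * (32 * A.card ^ 2 * B.card)
        ≤ ∑ _p ∈ (A ×ˢ A).filter (fun p => ¬ goodP Γ A B p.1 p.2), 3 * Γ.card ^ 2 := by
          refine Finset.sum_le_sum fun p hp => ?_
          have hng := (Finset.mem_filter.mp hp).2
          unfold goodP at hng
          rw [mul_comm]
          exact (Nat.lt_of_not_le hng).le
      _ = ((A ×ˢ A).filter (fun p => ¬ goodP Γ A B p.1 p.2)).card * (3 * Γ.card ^ 2) := by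
          rw [Finset.sum_const, smul_eq_mul]
      _ ≤ A.card ^ 2 * (3 * Γ.card ^ 2) := by
          refine Nat.mul_le_mul_right _ ?_
          calc ((A ×ˢ A).filter (fun p => ¬ goodP Γ A B p.1 p.2)).card
              ≤ (A ×ˢ A).card := Finset.card_filter_le _ _
            _ = A.card ^ 2 := by rw [Finset.card_product]; ring
  -- real version of h4
  have h4R : (∑ β ∈ B, (badc β : ℝ)) * (32 * ra ^ 2 * rb) ≤ ra ^ 2 * (3 * re ^ 2) := by
    have := h4
    have hcast : (((∑ β ∈ B, badc β) * (32 * A.card ^ 2 * B.card) : ℕ) : ℝ)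
        ≤ ((A.card ^ 2 * (3 * Γ.card ^ 2) : ℕ) : ℝ) := Nat.cast_le.mpr this
    push_cast at hcast
    rw [← hra, ← hrb, ← hre] at hcast
    linarith
  have hbadsum : 32 * rb * (∑ β ∈ B, (badc β : ℝ)) ≤ 3 * re ^ 2 := by
    have hnn : (0:ℝ) ≤ ∑ β ∈ B, (badc β : ℝ) :=
      Finset.sum_nonneg fun β _ => Nat.cast_nonneg _
    have hra2 : (0:ℝ) < ra ^ 2 := by positivity
    refine (mul_le_mul_iff_of_pos_right hra2).mp ?_
    linear_combination h4R
  -- selection of β₀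
  obtain ⟨β₀, hβ₀B, hβ₀max⟩ := B.exists_max_image
    (fun β => ((NP Γ A β).card : ℝ) ^ 2 - (16/3) * (badc β : ℝ)) hB
  set U : Finset G := NP Γ A β₀ with hU
  set ru : ℝ := (U.card : ℝ) with hru
  have hUA : U ⊆ A := Finset.filter_subset _ _
  have hsel : re ^ 2 / 2 ≤ rb ^ 2 * (ru ^ 2 - (16/3) * (badc β₀ : ℝ)) := by
    have e2 : ∑ β ∈ B, (((NP Γ A β).card : ℝ) ^ 2 - (16/3) * (badc β : ℝ))
        ≤ (B.card : ℝ) * (ru ^ 2 - (16/3) * (badc β₀ : ℝ)) := by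
      have := Finset.sum_le_card_nsmul B
        (fun β => ((NP Γ A β).card : ℝ) ^ 2 - (16/3) * (badc β : ℝ))
        (((NP Γ A β₀).card : ℝ) ^ 2 - (16/3) * (badc β₀ : ℝ))
        (fun β hβ => hβ₀max β hβ)
      rw [nsmul_eq_mul] at this
      exact this
    have e1 : ∑ β ∈ B, (((NP Γ A β).card : ℝ) ^ 2 - (16/3) * (badc β : ℝ))
        = (∑ β ∈ B, ((NP Γ A β).card : ℝ) ^ 2)
          - (16/3) * (∑ β ∈ B, (badc β : ℝ)) := by
      rw [Finset.sum_sub_distrib, ← Finset.mul_sum]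
    rw [e1] at e2
    rw [← hrb] at e2
    have e3 := mul_le_mul_of_nonneg_left e2 (by linarith : (0:ℝ) ≤ rb)
    nlinarith [h2, hbadsum, e3]
  have hbad₀ : (badc β₀ : ℝ) ≤ (3/16) * ru ^ 2 := by
    nlinarith [hsel, sq_nonneg re, mul_pos (by linarith : (0:ℝ) < rb) (by linarith : (0:ℝ) < rb)]
  have key1 : re ≤ 2 * rb * ru := by
    have h5 : re ^ 2 / 2 ≤ rb ^ 2 * ru ^ 2 := by
      nlinarith [(Nat.cast_nonneg (badc β₀) : (0:ℝ) ≤ (badc β₀ : ℝ))]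
    nlinarith [mul_nonneg (mul_nonneg (by norm_num : (0:ℝ) ≤ 2) (by linarith : (0:ℝ) ≤ rb))
      (by positivity : (0:ℝ) ≤ ru)]
  have hru0 : 0 < ru := by nlinarith
  -- the set A'
  set badU : G → ℕ := fun x => (U.filter fun y => ¬ goodP Γ A B x y).card with hbadU
  set A' : Finset G := U.filter (fun x => 8 * badU x ≤ 3 * U.card) with hA'
  have hA'A : A' ⊆ A := (Finset.filter_subset _ _).trans hUA
  -- size of A'
  have h9 : ru / 2 ≤ (A'.card : ℝ) := by
    have hsumbadU : ∑ x ∈ U, badU x = badc β₀ := by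
      rw [hbadc]
      exact (prodFilterCard U U (fun x y => ¬ goodP Γ A B x y)).symm
    set V : Finset G := U.filter (fun x => ¬ (8 * badU x ≤ 3 * U.card)) with hV
    have hVsum : V.card * (3 * U.card + 1) ≤ 8 * badc β₀ := by
      have hlow : ∀ x ∈ V, 3 * U.card + 1 ≤ 8 * badU x := by
        intro x hx
        have := (Finset.mem_filter.mp hx).2
        omega
      have := Finset.card_nsmul_le_sum V (fun x => 8 * badU x) (3 * U.card + 1) hlow
      rw [smul_eq_mul] at this
      calc V.card * (3 * U.card + 1) ≤ ∑ x ∈ V, 8 * badU x := this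
        _ = 8 * ∑ x ∈ V, badU x := by rw [Finset.mul_sum]
        _ ≤ 8 * ∑ x ∈ U, badU x := by
            exact Nat.mul_le_mul_left _
              (Finset.sum_le_sum_of_subset (Finset.filter_subset _ _))
        _ = 8 * badc β₀ := by rw [hsumbadU]
    have hsplit : A'.card + V.card = U.card :=
      Finset.card_filter_add_card_filter_not _
    have hVR : (V.card : ℝ) * (3 * ru) ≤ 8 * (badc β₀ : ℝ) := by
      have := (Nat.cast_le (α := ℝ)).mpr hVsum
      push_cast at this
      rw [← hru] at this
      nlinarith [(Nat.cast_nonneg V.card : (0:ℝ) ≤ (V.card : ℝ))]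
    have hVhalf : (V.card : ℝ) ≤ ru / 2 := by
      nlinarith [hVR, hbad₀, hru0]
    have : (A'.card : ℝ) + (V.card : ℝ) = ru := by
      rw [← Nat.cast_add, hsplit, hru]
    linarith
  -- common good neighbourhoods
  have h10 : ∀ x ∈ A', ∀ y ∈ A',
      ru / 4 ≤ ((A.filter fun z => goodP Γ A B x z ∧ goodP Γ A B y z).card : ℝ) := by
    intro x hx y hy
    have hx2 := (Finset.mem_filter.mp hx).2
    have hy2 := (Finset.mem_filter.mp hy).2
    have hsub : U.filter (fun z => ¬ (goodP Γ A B x z ∧ goodP Γ A B y z))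
        ⊆ (U.filter fun z => ¬ goodP Γ A B x z) ∪ (U.filter fun z => ¬ goodP Γ A B y z) := by
      intro z hz
      simp only [Finset.mem_filter, Finset.mem_union] at *
      tauto
    have hcardneg : (U.filter (fun z => ¬ (goodP Γ A B x z ∧ goodP Γ A B y z))).card
        ≤ badU x + badU y :=
      (Finset.card_le_card hsub).trans (Finset.card_union_le _ _)
    have hsplit : (U.filter (fun z => goodP Γ A B x z ∧ goodP Γ A B y z)).card
        + (U.filter (fun z => ¬ (goodP Γ A B x z ∧ goodP Γ A B y z))).card = U.card :=
      Finset.card_filter_add_card_filter_not _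
    have hmono : U.filter (fun z => goodP Γ A B x z ∧ goodP Γ A B y z)
        ⊆ A.filter (fun z => goodP Γ A B x z ∧ goodP Γ A B y z) := by
      intro z hz
      have := Finset.mem_filter.mp hz
      exact Finset.mem_filter.mpr ⟨hUA this.1, this.2⟩
    have hN : 2 * U.card ≤ 8 * (A.filter (fun z => goodP Γ A B x z ∧ goodP Γ A B y z)).card := by
      have := Finset.card_le_card hmono
      omega
    have := (Nat.cast_le (α := ℝ)).mpr hN
    push_cast at this
    rw [← hru] at this
    linarith
  refine ⟨A', hA'A, ?_, ?_⟩
  · rw [div_le_iff₀ (by linarith : (0:ℝ) < rb)]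
    nlinarith [h9, key1, hru0, hrb1]
  · -- main difference bound
    set R : G → Finset (G × G × G × G) := fun v =>
      (S ×ˢ S ×ˢ S ×ˢ S).filter fun q => q.1 - q.2.1 + q.2.2.1 - q.2.2.2 = v with hR
    set T' : Finset G := (A' ×ˢ A').image fun x => x.1 - x.2 with hT'
    have hdisj : ∀ v ∈ T', ∀ w ∈ T', v ≠ w → Disjoint (R v) (R w) := by
      intro v _ w _ hvw
      rw [Finset.disjoint_left]
      intro q hqv hqw
      exact hvw (((Finset.mem_filter.mp hqv).2.symm).trans (Finset.mem_filter.mp hqw).2)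
    have hsum : ∑ v ∈ T', (R v).card ≤ S.card ^ 4 := by
      rw [← Finset.card_biUnion hdisj]
      calc (T'.biUnion R).card ≤ (S ×ˢ S ×ˢ S ×ˢ S).card := by
            refine Finset.card_le_card ?_
            exact Finset.biUnion_subset.mpr fun v _ => Finset.filter_subset _ _
        _ = S.card ^ 4 := by simp [Finset.card_product]; ring
    -- per-difference lower bound
    have hperv : ∀ v ∈ T',
        ru / 4 * (9 * re ^ 4) ≤ ((R v).card : ℝ) * (1024 * ra ^ 4 * rb ^ 2) := by
      intro v hv
      obtain ⟨p, hp, hpv⟩ := Finset.mem_image.mp hv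
      obtain ⟨hpx, hpy⟩ := Finset.mem_product.mp hp
      set x := p.1 with hxd
      set y := p.2 with hyd
      set CG : Finset G := A.filter fun z => goodP Γ A B x z ∧ goodP Γ A B y z with hCG
      have hcg : ru / 4 ≤ (CG.card : ℝ) := h10 x hpx y hpy
      set T : Finset (G × G × G) := (CG ×ˢ B ×ˢ B).filter fun q =>
        ((x, q.2.1) ∈ Γ ∧ (q.1, q.2.1) ∈ Γ) ∧ ((q.1, q.2.2) ∈ Γ ∧ (y, q.2.2) ∈ Γ) with hT
      have hTcard : T.card = ∑ z ∈ CG, codP Γ B x z * codP Γ B z y := by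
        rw [hT]
        exact tripleFilterCard CG B B (fun z b => (x, b) ∈ Γ ∧ (z, b) ∈ Γ)
          (fun z b => (z, b) ∈ Γ ∧ (y, b) ∈ Γ)
      have hz : ∀ z ∈ CG, 9 * Γ.card ^ 4
          ≤ 1024 * A.card ^ 4 * B.card ^ 2 * (codP Γ B x z * codP Γ B z y) := by
        intro z hzc
        rw [hCG] at hzc
        obtain ⟨-, hgx, hgy⟩ := Finset.mem_filter.mp hzc
        have hg1 : 3 * Γ.card ^ 2 ≤ 32 * A.card ^ 2 * B.card * codP Γ B x z := hgx
        have hg2 : 3 * Γ.card ^ 2 ≤ 32 * A.card ^ 2 * B.card * codP Γ B z y := by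
          rw [codP_comm Γ B z y]
          exact hgy
        calc 9 * Γ.card ^ 4 = (3 * Γ.card ^ 2) * (3 * Γ.card ^ 2) := by ring
          _ ≤ (32 * A.card ^ 2 * B.card * codP Γ B x z)
              * (32 * A.card ^ 2 * B.card * codP Γ B z y) := Nat.mul_le_mul hg1 hg2
          _ = 1024 * A.card ^ 4 * B.card ^ 2 * (codP Γ B x z * codP Γ B z y) := by ring
      have hsumz : CG.card * (9 * Γ.card ^ 4)
          ≤ 1024 * A.card ^ 4 * B.card ^ 2 * T.card := by
        have hns := Finset.card_nsmul_le_sum CG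
          (fun z => 1024 * A.card ^ 4 * B.card ^ 2 * (codP Γ B x z * codP Γ B z y))
          (9 * Γ.card ^ 4) hz
        rw [smul_eq_mul] at hns
        calc CG.card * (9 * Γ.card ^ 4) ≤ _ := hns
          _ = 1024 * A.card ^ 4 * B.card ^ 2 * T.card := by
              rw [hTcard, Finset.mul_sum]
      have hTR : T.card ≤ (R v).card := by
        refine Finset.card_le_card_of_injOn
          (fun q => (x - q.2.1, q.1 - q.2.1, q.1 - q.2.2, y - q.2.2)) ?_ ?_
        · intro q hq
          rw [hT] at hq
          obtain ⟨hqmem, ⟨hq1, hq2⟩, hq3, hq4⟩ := Finset.mem_filter.mp hq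
          obtain ⟨hzCG, hbb⟩ := Finset.mem_product.mp hqmem
          rw [hR]
          refine Finset.mem_filter.mpr ⟨?_, ?_⟩
          · rw [hS]
            refine Finset.mem_product.mpr ⟨Finset.mem_image.mpr ⟨_, hq1, rfl⟩,
              Finset.mem_product.mpr ⟨Finset.mem_image.mpr ⟨_, hq2, rfl⟩,
              Finset.mem_product.mpr ⟨Finset.mem_image.mpr ⟨_, hq3, rfl⟩,
              Finset.mem_image.mpr ⟨_, hq4, rfl⟩⟩⟩⟩
          · show (x - q.2.1) - (q.1 - q.2.1) + (q.1 - q.2.2) - (y - q.2.2) = v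
            rw [← hpv]
            abel
        · intro q hq q' hq' heq
          obtain ⟨e1, e2, e3, e4⟩ : x - q.2.1 = x - q'.2.1 ∧ q.1 - q.2.1 = q'.1 - q'.2.1
              ∧ q.1 - q.2.2 = q'.1 - q'.2.2 ∧ y - q.2.2 = y - q'.2.2 := by
            simpa [Prod.ext_iff] using heq
          have hb1 : q.2.1 = q'.2.1 := sub_right_inj.mp e1
          have hz1 : q.1 = q'.1 := by
            rw [hb1] at e2
            exact sub_left_inj.mp e2
          have hb2 : q.2.2 = q'.2.2 := by
            rw [hz1] at e3
            exact sub_right_inj.mp e3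
          exact Prod.ext hz1 (Prod.ext hb1 hb2)
      have hcast : (CG.card : ℝ) * (9 * re ^ 4)
          ≤ 1024 * ra ^ 4 * rb ^ 2 * ((R v).card : ℝ) := by
        have h6 : CG.card * (9 * Γ.card ^ 4) ≤ 1024 * A.card ^ 4 * B.card ^ 2 * (R v).card :=
          le_trans hsumz (Nat.mul_le_mul_left _ hTR)
        have h7 := (Nat.cast_le (α := ℝ)).mpr h6
        push_cast at h7
        rw [← hra, ← hrb, ← hre] at h7
        exact h7
      nlinarith [hcg, hcast, (by positivity : (0:ℝ) ≤ 9 * re ^ 4)]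
    -- combine
    have hbig : (T'.card : ℝ) * (ru / 4 * (9 * re ^ 4))
        ≤ rd ^ 4 * (1024 * ra ^ 4 * rb ^ 2) := by
      have hs := Finset.card_nsmul_le_sum T'
        (fun v => ((R v).card : ℝ) * (1024 * ra ^ 4 * rb ^ 2)) (ru / 4 * (9 * re ^ 4)) hperv
      rw [nsmul_eq_mul] at hs
      have hsum2 : ∑ v ∈ T', ((R v).card : ℝ) * (1024 * ra ^ 4 * rb ^ 2)
          ≤ rd ^ 4 * (1024 * ra ^ 4 * rb ^ 2) := by
        rw [← Finset.sum_mul]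
        have h' : (∑ v ∈ T', ((R v).card : ℝ)) ≤ ((S.card : ℝ)) ^ 4 := by
          exact_mod_cast hsum
        rw [← hrd] at h'
        exact mul_le_mul_of_nonneg_right h' (by positivity)
      linarith
    rw [le_div_iff₀ (by positivity : (0:ℝ) < re ^ 5)]
    have hTnn : (0:ℝ) ≤ (T'.card : ℝ) := Nat.cast_nonneg _
    calc (T'.card : ℝ) * re ^ 5 ≤ (T'.card : ℝ) * re ^ 4 * (2 * rb * ru) := by
          have := mul_le_mul_of_nonneg_left key1
            (by positivity : (0:ℝ) ≤ (T'.card : ℝ) * re ^ 4)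
          calc (T'.card : ℝ) * re ^ 5 = (T'.card : ℝ) * re ^ 4 * re := by ring
            _ ≤ (T'.card : ℝ) * re ^ 4 * (2 * rb * ru) := this
      _ = (8 * rb / 9) * ((T'.card : ℝ) * (ru / 4 * (9 * re ^ 4))) := by ring
      _ ≤ (8 * rb / 9) * (rd ^ 4 * (1024 * ra ^ 4 * rb ^ 2)) := by
          refine mul_le_mul_of_nonneg_left hbig (by positivity)
      _ = (8192 / 9) * (ra ^ 4 * rb ^ 3 * rd ^ 4) := by ring
      _ ≤ 1024 * ra ^ 4 * rb ^ 3 * rd ^ 4 := by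
          nlinarith [mul_nonneg (mul_nonneg (by positivity : (0:ℝ) ≤ ra ^ 4)
            (by positivity : (0:ℝ) ≤ rb ^ 3)) (by positivity : (0:ℝ) ≤ rd ^ 4)]

end BSG
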